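/- Let Ξ be a symmetric n×n real matrix with strictly positive entries, and let p, q be vectors with strictly positive entries. Then ln(pᵀ Ξ p) ≥ (2 qᵀ Ξ [q ln(p/q)]) / (qᵀ Ξ q) + ln(qᵀ Ξ q), where [q ln(p/q)] is the vector with entries q_i * ln(p_i/q_i). -/

import Mathlib

theorem log_quadratic_form_lower_bound {n : ℕ} (Ξ : Matrix (Fin n) (Fin n) ℝ)
    (hsymm : Ξ.IsSymm) (hpos : ∀ i j, 0 < Ξ i j)
    (p q : Fin n → ℝ) (hp : ∀ i, 0 < p i) (hq : ∀ i, 0 < q i) :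
    Real.log (∑ i, ∑ j, p i * Ξ i j * p j) ≥
      2 * (∑ i, ∑ j, q i * Ξ i j * (q j * Real.log (p j / q j))) /
        (∑ i, ∑ j, q i * Ξ i j * q j) +
      Real.log (∑ i, ∑ j, q i * Ξ i j * q j) := by
  rcases Nat.eq_zero_or_pos n with hn | hn
  · subst hn; simp
  haveI : Nonempty (Fin n) := ⟨⟨0, hn⟩⟩
  set A := ∑ i, ∑ j, p i * Ξ i j * p j with hA
  set S := ∑ i, ∑ j, q i * Ξ i j * q j with hS
  set T := ∑ i, ∑ j, q i * Ξ i j * (q j * Real.log (p j / q j)) with hT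
  have hSpos : 0 < S := Finset.sum_pos (fun i _ => Finset.sum_pos
    (fun j _ => by have := hpos i j; have := hq i; have := hq j; positivity)
    Finset.univ_nonempty) Finset.univ_nonempty
  have hApos : 0 < A := Finset.sum_pos (fun i _ => Finset.sum_pos
    (fun j _ => by have := hpos i j; have := hp i; have := hp j; positivity)
    Finset.univ_nonempty) Finset.univ_nonempty
  -- pointwise tangent-line bound
  have hle : ∀ i j, q i * Ξ i j * q j * Real.log ((p i * p j) / (q i * q j)) ≤
      p i * Ξ i j * p j * (S / A) - q i * Ξ i j * q j
        + q i * Ξ i j * q j * (Real.log A - Real.log S) := by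
    intro i j
    have hpi := hp i; have hpj := hp j; have hqi := hq i; have hqj := hq j
    have hΞ := hpos i j
    set t := (p i * p j) / (q i * q j) with hTt
    have ht : 0 < t := by positivity
    have h1 : Real.log (t * (S / A)) ≤ t * (S / A) - 1 :=
      Real.log_le_sub_one_of_pos (by positivity)
    have hlog : Real.log (t * (S / A)) = Real.log t + (Real.log S - Real.log A) := by
      rw [Real.log_mul (ne_of_gt ht) (by positivity),
        Real.log_div (ne_of_gt hSpos) (ne_of_gt hApos)]
    have h2 : Real.log t ≤ t * (S / A) - 1 + (Real.log A - Real.log S) := by linarith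
    have hwt : (q i * Ξ i j * q j) * t = p i * Ξ i j * p j := by
      rw [hTt, mul_comm (q i * Ξ i j * q j), div_mul_eq_mul_div, div_eq_iff (by positivity)]; ring
    have hw : 0 < q i * Ξ i j * q j := by positivity
    calc q i * Ξ i j * q j * Real.log t
        ≤ q i * Ξ i j * q j * (t * (S / A) - 1 + (Real.log A - Real.log S)) := by
          exact mul_le_mul_of_nonneg_left h2 hw.le
      _ = (q i * Ξ i j * q j * t) * (S / A) - q i * Ξ i j * q j
            + q i * Ξ i j * q j * (Real.log A - Real.log S) := by ring
      _ = p i * Ξ i j * p j * (S / A) - q i * Ξ i j * q j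
            + q i * Ξ i j * q j * (Real.log A - Real.log S) := by rw [hwt]
  have key : ∑ i, ∑ j, q i * Ξ i j * q j * Real.log ((p i * p j) / (q i * q j))
      ≤ S * (Real.log A - Real.log S) := by
    have := Finset.sum_le_sum (fun i (_ : i ∈ Finset.univ) =>
      Finset.sum_le_sum (fun j (_ : j ∈ Finset.univ) => hle i j))
    have hrhs : ∑ i, ∑ j, (p i * Ξ i j * p j * (S / A) - q i * Ξ i j * q j
        + q i * Ξ i j * q j * (Real.log A - Real.log S))
        = A * (S / A) - S + S * (Real.log A - Real.log S) := by
      simp only [Finset.sum_add_distrib, Finset.sum_sub_distrib,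
        ← Finset.sum_mul, ← hA, ← hS]
    have hAS : A * (S / A) = S := by field_simp
    calc ∑ i, ∑ j, q i * Ξ i j * q j * Real.log ((p i * p j) / (q i * q j))
        ≤ ∑ i, ∑ j, (p i * Ξ i j * p j * (S / A) - q i * Ξ i j * q j
            + q i * Ξ i j * q j * (Real.log A - Real.log S)) := this
      _ = A * (S / A) - S + S * (Real.log A - Real.log S) := hrhs
      _ = S * (Real.log A - Real.log S) := by rw [hAS]; ring
  -- the double sum equals 2T
  have hsplit : ∑ i, ∑ j, q i * Ξ i j * q j * Real.log ((p i * p j) / (q i * q j))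
      = 2 * T := by
    have hlog2 : ∀ i j, Real.log ((p i * p j) / (q i * q j))
        = Real.log (p i / q i) + Real.log (p j / q j) := by
      intro i j
      have hpi := hp i; have hpj := hp j; have hqi := hq i; have hqj := hq j
      rw [show (p i * p j) / (q i * q j) = (p i / q i) * (p j / q j) by
        field_simp]
      exact Real.log_mul (by positivity) (by positivity)
    have h1 : ∑ i, ∑ j, q i * Ξ i j * q j * Real.log (p i / q i) = T := by
      rw [Finset.sum_comm]
      rw [hT]
      refine Finset.sum_congr rfl fun j _ => Finset.sum_congr rfl fun i _ => ?_
      have : Ξ i j = Ξ j i := (hsymm.apply i j).symm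
      rw [this]; ring
    have h2 : ∑ i, ∑ j, q i * Ξ i j * q j * Real.log (p j / q j) = T := by
      rw [hT]
      refine Finset.sum_congr rfl fun i _ => Finset.sum_congr rfl fun j _ => ?_
      ring
    calc ∑ i, ∑ j, q i * Ξ i j * q j * Real.log ((p i * p j) / (q i * q j))
        = ∑ i, ∑ j, (q i * Ξ i j * q j * Real.log (p i / q i)
            + q i * Ξ i j * q j * Real.log (p j / q j)) := by
          refine Finset.sum_congr rfl fun i _ => Finset.sum_congr rfl fun j _ => ?_
          rw [hlog2 i j]; ring
      _ = (∑ i, ∑ j, q i * Ξ i j * q j * Real.log (p i / q i))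
            + ∑ i, ∑ j, q i * Ξ i j * q j * Real.log (p j / q j) := by
          simp [Finset.sum_add_distrib]
      _ = 2 * T := by rw [h1, h2]; ring
  rw [hsplit] at key
  have : 2 * T / S ≤ Real.log A - Real.log S := by
    rw [div_le_iff₀ hSpos]; linarith [key]
  linarith
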